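/- Let 0 < α ≤ β and D ∈ ℝ. If interpolation data (z_i, v_i)_{i∈I}, (x_k, δ_k)_{k∈K} in E is interpolated by some nonempty closed convex set C that is α-strongly convex, β-smooth and has diam(C) ≤ D, then the data satisfies the conditions Interp(α, β, D; 1). -/

import Mathlib

open Metric Set
open scoped RealInnerProductSpace Pointwise

noncomputable section

variable {F : Type*} [NormedAddCommGroup F] [InnerProductSpace ℝ F]

/-- The normal cone of a set `C` at a point `z`. -/
def normalCone (C : Set F) (z : F) : Set F :=
  {v | ∀ x ∈ C, ⟪v, x - z⟫ ≤ 0}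

/-- A set `C` is `β`-smooth if at every boundary point `z`, every unit normal vector `n`
gives a closed ball of radius `1/β` centered at `z - (1/β) n` contained in `C`. -/
def IsSmoothSet (β : ℝ) (C : Set F) : Prop :=
  ∀ z ∈ frontier C, ∀ n ∈ normalCone C z, ‖n‖ = 1 →
    closedBall (z - (1 / β) • n) (1 / β) ⊆ C

/-- A set `C` is `α`-strongly convex if at every boundary point `z`, every unit normal
vector `n` gives a closed ball of radius `1/α` centered at `z - (1/α) n` containing `C`. -/
def IsStronglyConvexSet (α : ℝ) (C : Set F) : Prop :=
  ∀ z ∈ frontier C, ∀ n ∈ normalCone C z, ‖n‖ = 1 →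
    C ⊆ closedBall (z - (1 / α) • n) (1 / α)

/-- `diam C ≤ D`, expressed pointwise. -/
def DiamLE (C : Set F) (D : ℝ) : Prop :=
  ∀ x ∈ C, ∀ y ∈ C, ‖x - y‖ ≤ D

/-- The `δ`-interior of a set: points whose closed `δ`-ball lies inside the set. -/
def deltaInterior (δ : ℝ) (C : Set F) : Set F :=
  {x | closedBall x δ ⊆ C}

/-- The set `C` interpolates the data: `z i ∈ C` with normal vector `v i`, and
`x k` lies in the `δ k`-interior of `C`. -/
def InterpolatedBy {ι κ : Type*} (C : Set F) (z v : ι → F) (x : κ → F) (δ : κ → ℝ) : Prop :=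
  (∀ i, z i ∈ C ∧ v i ∈ normalCone C (z i)) ∧ ∀ k, x k ∈ deltaInterior (δ k) C

/-- The interpolation conditions `Interp(α, β, D; λ)`, with `n i = v i / ‖v i‖`,
`r = 1/α - 1/β` and `s k = max 0 (δ k - 1/β)`. -/
def InterpCond {ι κ : Type*} (α β D lam : ℝ) (z v : ι → F) (x : κ → F) (δ : κ → ℝ) : Prop :=
  ∃ w : κ → F,
    (∀ i j, ‖z i - (1 / α) • (‖v i‖⁻¹ • v i) - (z j - (1 / β) • (‖v j‖⁻¹ • v j))‖ ≤
      1 / α - 1 / β) ∧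
    (∀ i k, ‖z i - (1 / α) • (‖v i‖⁻¹ • v i) - w k‖ ≤
      (1 / α - 1 / β) - max 0 (δ k - 1 / β)) ∧
    (∀ k, ‖x k - w k‖ ≤ 1 / β - δ k + max 0 (δ k - 1 / β)) ∧
    (∀ i j, ‖z i - (1 / β) • (‖v i‖⁻¹ • v i) - (z j - (1 / β) • (‖v j‖⁻¹ • v j))‖ ≤
      lam * (D - 2 / β)) ∧
    (∀ i k, ‖z i - (1 / β) • (‖v i‖⁻¹ • v i) - w k‖ ≤
      lam * (D - 2 / β) - max 0 (δ k - 1 / β)) ∧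
    (∀ k l, ‖w k - w l‖ ≤ lam * (D - 2 / β) - max 0 (δ k - 1 / β) - max 0 (δ l - 1 / β))

section AuxLemmas

variable {F : Type*} [NormedAddCommGroup F] [InnerProductSpace ℝ F]

lemma aux_unit_norm {v : F} (hv : v ≠ 0) : ‖‖v‖⁻¹ • v‖ = 1 := by
  rw [norm_smul, norm_inv, norm_norm, inv_mul_cancel₀ (norm_ne_zero_iff.2 hv)]

lemma aux_smul_normalCone {C : Set F} {z v : F} (h : v ∈ normalCone C z) {c : ℝ} (hc : 0 ≤ c) :
    c • v ∈ normalCone C z := fun x hx => by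
  rw [real_inner_smul_left]
  exact mul_nonpos_of_nonneg_of_nonpos hc (h x hx)

lemma aux_mem_frontier {C : Set F} {z v : F} (hz : z ∈ C) (hv : v ≠ 0)
    (hn : v ∈ normalCone C z) : z ∈ frontier C := by
  refine ⟨subset_closure hz, fun hzi => ?_⟩
  rw [mem_interior_iff_mem_nhds, Metric.mem_nhds_iff] at hzi
  obtain ⟨ε, hε, hball⟩ := hzi
  have hvn : (0:ℝ) < ‖v‖ := norm_pos_iff.2 hv
  set t : ℝ := ε / (2 * ‖v‖) with ht
  have htpos : 0 < t := by positivity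
  have hmem : z + t • v ∈ C := by
    apply hball
    simp only [Metric.mem_ball, dist_eq_norm, add_sub_cancel_left, norm_smul,
      Real.norm_eq_abs, abs_of_pos htpos]
    have h5 : t * ‖v‖ = ε / 2 := by
      rw [ht]
      field_simp
    linarith
  have := hn _ hmem
  rw [add_sub_cancel_left, real_inner_smul_right, real_inner_self_eq_norm_sq] at this
  nlinarith [mul_pos htpos (pow_pos hvn 2)]

lemma aux_aligned_unit (e : F) (he : ‖e‖ = 1) (a : F) :
    ∃ u : F, ‖u‖ = 1 ∧ ∀ t : ℝ, 0 ≤ t → ‖a + t • u‖ = ‖a‖ + t := by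
  by_cases ha : a = 0
  · exact ⟨e, he, fun t ht => by simp [ha, norm_smul, he, abs_of_nonneg ht]⟩
  · have han : (0:ℝ) < ‖a‖ := norm_pos_iff.2 ha
    refine ⟨‖a‖⁻¹ • a, aux_unit_norm ha, fun t ht => ?_⟩
    have : a + t • ‖a‖⁻¹ • a = (1 + t * ‖a‖⁻¹) • a := by
      rw [add_smul, one_smul, smul_smul]
    rw [this, norm_smul, Real.norm_eq_abs, abs_of_nonneg (by positivity), add_mul, one_mul,
      mul_assoc, inv_mul_cancel₀ (ne_of_gt han), mul_one]

/-- From `closedBall p r₁ ⊆ closedBall q r₂` deduce the distance bound. -/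
lemma aux_ball_in_ball (e : F) (he : ‖e‖ = 1) {p q : F} {r₁ r₂ : ℝ} (hr₁ : 0 ≤ r₁)
    (h : Metric.closedBall p r₁ ⊆ Metric.closedBall q r₂) : ‖p - q‖ + r₁ ≤ r₂ := by
  obtain ⟨u, hu, hkey⟩ := aux_aligned_unit e he (p - q)
  have hm : p + r₁ • u ∈ Metric.closedBall p r₁ := by
    simp [Metric.mem_closedBall, dist_eq_norm, norm_smul, hu, abs_of_nonneg hr₁]
  have h2 := h hm
  rw [Metric.mem_closedBall, dist_eq_norm] at h2
  have h3 : p + r₁ • u - q = p - q + r₁ • u := by abel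
  rw [h3, hkey r₁ hr₁] at h2
  exact h2

/-- Two balls inside a set of diameter at most `D`. -/
lemma aux_two_balls (e : F) (he : ‖e‖ = 1) {C : Set F} {D : ℝ} (hD : DiamLE C D)
    {p q : F} {r₁ r₂ : ℝ} (hr₁ : 0 ≤ r₁) (hr₂ : 0 ≤ r₂)
    (h₁ : Metric.closedBall p r₁ ⊆ C) (h₂ : Metric.closedBall q r₂ ⊆ C) :
    ‖p - q‖ ≤ D - r₁ - r₂ := by
  obtain ⟨u, hu, hkey⟩ := aux_aligned_unit e he (p - q)
  have hp : p + r₁ • u ∈ C := h₁ (by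
    simp [Metric.mem_closedBall, dist_eq_norm, norm_smul, hu, abs_of_nonneg hr₁])
  have hq : q - r₂ • u ∈ C := h₂ (by
    simp [Metric.mem_closedBall, dist_eq_norm, norm_smul, hu, abs_of_nonneg hr₂])
  have h3 := hD _ hp _ hq
  have h4 : p + r₁ • u - (q - r₂ • u) = p - q + (r₁ + r₂) • u := by
    rw [add_smul]; abel
  rw [h4, hkey (r₁ + r₂) (by positivity)] at h3
  linarith

/-- Projection onto a nonempty closed convex set gives a point with normal vector. -/
lemma aux_proj [CompleteSpace F] {C : Set F} (hne : C.Nonempty) (hcl : IsClosed C)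
    (hcv : Convex ℝ C) {y : F} (hy : y ∉ C) :
    ∃ p ∈ C, y - p ≠ 0 ∧ y - p ∈ normalCone C p := by
  obtain ⟨p, hp, hmin⟩ := exists_norm_eq_iInf_of_complete_convex hne hcl.isComplete hcv y
  have hn := (norm_eq_iInf_iff_real_inner_le_zero hcv hp).1 hmin
  exact ⟨p, hp, sub_ne_zero.2 fun h => hy (h ▸ hp), fun c hc => hn c hc⟩

/-- A smooth bounded nonempty closed convex set has nonempty interior. -/
lemma aux_interior_nonempty [CompleteSpace F] (e : F) (he : ‖e‖ = 1) {C : Set F} {β D : ℝ}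
    (hβ : 0 < β) (hne : C.Nonempty) (hcl : IsClosed C) (hcv : Convex ℝ C)
    (hsm : IsSmoothSet β C) (hD : DiamLE C D) : (interior C).Nonempty := by
  obtain ⟨c₀, hc₀⟩ := hne
  have hD0 : 0 ≤ D := by simpa using hD c₀ hc₀ c₀ hc₀
  have hy : c₀ + (D + 1) • e ∉ C := by
    intro hmem
    have := hD _ hmem c₀ hc₀
    rw [add_sub_cancel_left, norm_smul, Real.norm_eq_abs, he, mul_one,
      abs_of_nonneg (by linarith)] at this
    linarith
  obtain ⟨p, hp, hvne, hvnc⟩ := aux_proj ⟨c₀, hc₀⟩ hcl hcv hy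
  set n : F := ‖c₀ + (D + 1) • e - p‖⁻¹ • (c₀ + (D + 1) • e - p) with hn
  have hfr : p ∈ frontier C := aux_mem_frontier hp hvne hvnc
  have hball := hsm p hfr n (aux_smul_normalCone hvnc (by positivity)) (aux_unit_norm hvne)
  refine ⟨p - (1 / β) • n, ?_⟩
  rw [mem_interior_iff_mem_nhds, Metric.mem_nhds_iff]
  exact ⟨1 / β, by positivity, fun w hw => hball (Metric.ball_subset_closedBall hw)⟩

/-- Supporting unit normal at any frontier point. -/
lemma aux_unit_normal [CompleteSpace F] {C : Set F} (hcv : Convex ℝ C)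
    (hint : (interior C).Nonempty) {z : F} (hz : z ∈ frontier C) :
    ∃ n : F, ‖n‖ = 1 ∧ n ∈ normalCone C z := by
  obtain ⟨y₀, hy₀⟩ := hint
  have hzni : z ∉ interior C := hz.2
  obtain ⟨f, hf⟩ := geometric_hahn_banach_open_point hcv.interior isOpen_interior hzni
  have hle : ∀ c ∈ C, f c ≤ f z := by
    intro c hc
    by_contra hcon
    push_neg at hcon
    set M : ℝ := f y₀ - f c with hM
    set t : ℝ := min 1 ((f c - f z) / (|M| + 1)) with htdef
    have hAbs : (0:ℝ) ≤ |M| := abs_nonneg M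
    have ht0 : 0 < t := lt_min one_pos (div_pos (by linarith) (by positivity))
    have ht1 : t ≤ 1 := min_le_left _ _
    have hmem : c + t • (y₀ - c) ∈ interior C :=
      hcv.add_smul_sub_mem_interior hc hy₀ ⟨ht0, ht1⟩
    have hlt := hf _ hmem
    rw [map_add, map_smul, map_sub, smul_eq_mul] at hlt
    have htle : t ≤ (f c - f z) / (|M| + 1) := min_le_right _ _
    have h1 : t * |M| ≤ (f c - f z) / (|M| + 1) * |M| :=
      mul_le_mul_of_nonneg_right htle hAbs
    have h2 : (f c - f z) / (|M| + 1) * |M| < f c - f z := by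
      rw [div_mul_eq_mul_div, div_lt_iff₀ (by positivity)]
      nlinarith
    have h3 : -(t * |M|) ≤ t * M := by
      have := neg_abs_le M
      nlinarith
    nlinarith
  have hfne : f z - f y₀ > 0 := by
    have := hf y₀ hy₀
    linarith
  set n' : F := (InnerProductSpace.toDual ℝ F).symm f with hn'
  have hinner : ∀ w : F, ⟪n', w⟫ = f w := fun w => InnerProductSpace.toDual_symm_apply
  have hn'ne : n' ≠ 0 := by
    intro h0
    have := hinner (z - y₀)
    rw [h0, inner_zero_left, map_sub] at this
    linarith
  refine ⟨‖n'‖⁻¹ • n', aux_unit_norm hn'ne, aux_smul_normalCone ?_ (by positivity)⟩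
  intro c hc
  rw [hinner, map_sub]
  linarith [hle c hc]

/-- Key existence of the witness point `w`. -/
lemma aux_exists_w [CompleteSpace F] [ProperSpace F] (e : F) (he : ‖e‖ = 1)
    {C : Set F} {β : ℝ} (hβ : 0 < β) (hcl : IsClosed C) (hcv : Convex ℝ C)
    (hsm : IsSmoothSet β C) (hintne : (interior C).Nonempty)
    {x : F} {δ : ℝ} (hδ : 0 ≤ δ) (hx : Metric.closedBall x δ ⊆ C) :
    ∃ w, ‖x - w‖ ≤ max 0 (1 / β - δ) ∧ Metric.closedBall w (max δ (1 / β)) ⊆ C := by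
  have hxC : x ∈ C := hx (Metric.mem_closedBall_self hδ)
  by_cases hcase : Metric.closedBall x (1 / β) ⊆ C
  · refine ⟨x, by simp [le_max_left], ?_⟩
    rcases le_total δ (1 / β) with h | h
    · rwa [max_eq_right h]
    · rwa [max_eq_left h]
  · -- the complement is nonempty and close
    obtain ⟨y₀, hy₀b, hy₀C⟩ := not_subset.1 hcase
    have hccne : Cᶜ.Nonempty := ⟨y₀, hy₀C⟩
    set ρ : ℝ := Metric.infDist x Cᶜ with hρdef
    have hρβ : ρ ≤ 1 / β := by
      have h1 := Metric.infDist_le_dist_of_mem (x := x) (show y₀ ∈ Cᶜ from hy₀C)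
      have h2 := Metric.mem_closedBall.1 hy₀b
      rw [dist_comm] at h1
      linarith
    have hδρ : δ ≤ ρ := by
      by_contra hcon
      push_neg at hcon
      obtain ⟨y, hyc, hyd⟩ := (Metric.infDist_lt_iff hccne).1 hcon
      exact hyc (hx (Metric.mem_closedBall.2 (by rw [dist_comm]; exact hyd.le)))
    have hρ0 : 0 ≤ ρ := le_trans hδ hδρ
    have hball : Metric.closedBall x ρ ⊆ C := by
      rcases eq_or_lt_of_le hρ0 with h0 | h0
      · intro w hw
        rw [Metric.mem_closedBall, ← h0, dist_le_zero] at hw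
        rwa [hw]
      · have hsub : Metric.ball x ρ ⊆ C := by
          intro w hw
          by_contra hwc
          have := Metric.infDist_le_dist_of_mem (x := x) (show w ∈ Cᶜ from hwc)
          rw [Metric.mem_ball, dist_comm] at hw
          linarith
        calc Metric.closedBall x ρ = closure (Metric.ball x ρ) :=
              (closure_ball x (ne_of_gt h0)).symm
          _ ⊆ closure C := closure_mono hsub
          _ = C := hcl.closure_eq
    -- the attained closest boundary point
    obtain ⟨z₀, hz₀mem, hz₀d⟩ := isClosed_closure.exists_infDist_eq_dist
      hccne.closure x
    rw [Metric.infDist_closure] at hz₀d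
    have hz₀ρ : dist x z₀ = ρ := by rw [hρdef, ← hz₀d]
    have hz₀C : z₀ ∈ C := hball (Metric.mem_closedBall.2 (by rw [dist_comm]; exact le_of_eq hz₀ρ))
    have hz₀fr : z₀ ∈ frontier C := by
      refine ⟨subset_closure hz₀C, fun hi => ?_⟩
      rw [closure_compl] at hz₀mem
      exact hz₀mem hi
    obtain ⟨n, hn1, hnc⟩ := aux_unit_normal hcv hintne hz₀fr
    have hkey : ⟪n, x - z₀⟫ ≤ -ρ := by
      have hmem : x + ρ • n ∈ C := hball (by
        simp [Metric.mem_closedBall, dist_eq_norm, norm_smul, hn1, abs_of_nonneg hρ0])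
      have := hnc _ hmem
      have heq : x + ρ • n - z₀ = x - z₀ + ρ • n := by abel
      rw [heq, inner_add_right, real_inner_smul_right, real_inner_self_eq_norm_sq, hn1] at this
      nlinarith
    set w : F := z₀ - (1 / β) • n with hw
    have hballw : Metric.closedBall w (1 / β) ⊆ C := hsm z₀ hz₀fr n hnc hn1
    have hxz : ‖x - z₀‖ = ρ := by rw [← dist_eq_norm, hz₀ρ]
    have hnormsq : ‖x - w‖ ^ 2 ≤ (1 / β - δ) ^ 2 := by
      have heq : x - w = x - z₀ + (1 / β) • n := by rw [hw]; abel
      rw [heq, norm_add_sq_real, real_inner_smul_right, norm_smul, Real.norm_eq_abs,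
        abs_of_pos (by positivity : (0:ℝ) < 1 / β), hn1, mul_one, hxz]
      have hsymm : ⟪x - z₀, n⟫ = ⟪n, x - z₀⟫ := real_inner_comm _ _
      rw [hsymm]
      nlinarith
    have hnorm : ‖x - w‖ ≤ 1 / β - δ := by
      nlinarith [norm_nonneg (x - w), hρβ, hδρ]
    refine ⟨w, ?_, ?_⟩
    · exact le_trans hnorm (le_max_right _ _)
    · rw [max_eq_right (by linarith : δ ≤ 1 / β)]
      exact hballw

end AuxLemmas

/-- Necessity of the interpolation conditions: if the data is interpolated by a nonempty
closed convex set that is `α`-strongly convex, `β`-smooth and has diameter at most `D`,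
then the data satisfies `Interp(α, β, D; 1)`. -/
theorem interpolation_necessary {d : ℕ} (hd : 1 ≤ d) {ι κ : Type*} [Fintype ι] [Fintype κ]
    (α β D : ℝ) (hα : 0 < α) (hαβ : α ≤ β)
    (z v : ι → EuclideanSpace ℝ (Fin d)) (hv : ∀ i, v i ≠ 0)
    (x : κ → EuclideanSpace ℝ (Fin d)) (δ : κ → ℝ) (hδ : ∀ k, 0 ≤ δ k)
    (C : Set (EuclideanSpace ℝ (Fin d))) (hne : C.Nonempty) (hcl : IsClosed C)
    (hcv : Convex ℝ C) (hsc : IsStronglyConvexSet α C) (hsm : IsSmoothSet β C)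
    (hdiam : DiamLE C D) (hint : InterpolatedBy C z v x δ) :
    InterpCond α β D 1 z v x δ := by
  have hβ : 0 < β := lt_of_lt_of_le hα hαβ
  set e : EuclideanSpace ℝ (Fin d) := EuclideanSpace.single (⟨0, hd⟩ : Fin d) (1 : ℝ) with hedef
  have he : ‖e‖ = 1 := by
    rw [hedef, EuclideanSpace.norm_single, norm_one]
  set n : ι → EuclideanSpace ℝ (Fin d) := fun i => ‖v i‖⁻¹ • v i with hndef
  have hn1 : ∀ i, ‖n i‖ = 1 := fun i => aux_unit_norm (hv i)
  have hnc : ∀ i, n i ∈ normalCone C (z i) :=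
    fun i => aux_smul_normalCone (hint.1 i).2 (by positivity)
  have hfr : ∀ i, z i ∈ frontier C :=
    fun i => aux_mem_frontier (hint.1 i).1 (hv i) (hint.1 i).2
  -- inner and outer balls at the contact points
  have hballb : ∀ i, Metric.closedBall (z i - (1 / β) • n i) (1 / β) ⊆ C :=
    fun i => hsm (z i) (hfr i) (n i) (hnc i) (hn1 i)
  have hballa : ∀ i, C ⊆ Metric.closedBall (z i - (1 / α) • n i) (1 / α) :=
    fun i => hsc (z i) (hfr i) (n i) (hnc i) (hn1 i)
  -- interior nonempty and the witness points
  have hintne : (interior C).Nonempty := aux_interior_nonempty e he hβ hne hcl hcv hsm hdiam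
  have hxball : ∀ k, Metric.closedBall (x k) (δ k) ⊆ C := fun k => hint.2 k
  choose w hw1 hw2 using fun k =>
    aux_exists_w e he hβ hcl hcv hsm hintne (hδ k) (hxball k)
  -- abbreviations
  set s : κ → ℝ := fun k => max 0 (δ k - 1 / β) with hsdef
  have hs0 : ∀ k, 0 ≤ s k := fun k => le_max_left _ _
  have hsmax : ∀ k, max (δ k) (1 / β) = 1 / β + s k := by
    intro k
    rcases le_total (δ k) (1 / β) with h | h
    · rw [max_eq_right h, hsdef]
      simp only []
      rw [max_eq_left (by linarith)]
      ring
    · rw [max_eq_left h, hsdef]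
      simp only []
      rw [max_eq_right (by linarith)]
      ring
  have hmax2 : ∀ k, max 0 (1 / β - δ k) = 1 / β - δ k + s k := by
    intro k
    rcases le_total (δ k) (1 / β) with h | h
    · rw [max_eq_right (by linarith), hsdef]
      simp only []
      rw [max_eq_left (by linarith)]
      ring
    · rw [max_eq_left (by linarith), hsdef]
      simp only []
      rw [max_eq_right (by linarith)]
      ring
  have hballw : ∀ k, Metric.closedBall (w k) (1 / β + s k) ⊆ C := by
    intro k
    rw [← hsmax k]
    exact hw2 k
  refine ⟨w, ?_, ?_, ?_, ?_, ?_, ?_⟩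
  · -- condition 1
    intro i j
    have h := aux_ball_in_ball e he (by positivity : (0:ℝ) ≤ 1 / β)
      ((hballb j).trans (hballa i))
    have heq : ‖z i - (1 / α) • (‖v i‖⁻¹ • v i) - (z j - (1 / β) • (‖v j‖⁻¹ • v j))‖
        = ‖z j - (1 / β) • n j - (z i - (1 / α) • n i)‖ := by
      simp only [hndef]
      exact (norm_sub_rev _ _)
    rw [heq]
    linarith
  · -- condition 2
    intro i k
    have h := aux_ball_in_ball e he (by positivity : (0:ℝ) ≤ 1 / β + s k)
      ((hballw k).trans (hballa i))
    have heq : ‖z i - (1 / α) • (‖v i‖⁻¹ • v i) - w k‖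
        = ‖w k - (z i - (1 / α) • n i)‖ := by
      simp only [hndef]
      exact (norm_sub_rev _ _)
    rw [heq]
    linarith
  · -- condition 3
    intro k
    have h := hw1 k
    rw [hmax2 k] at h
    linarith
  · -- condition 4
    intro i j
    have h := aux_two_balls e he hdiam (by positivity : (0:ℝ) ≤ 1 / β)
      (by positivity : (0:ℝ) ≤ 1 / β) (hballb i) (hballb j)
    simp only [hndef] at h
    have h2 : (2:ℝ) / β = 1 / β + 1 / β := by ring
    linarith
  · -- condition 5
    intro i k
    have h := aux_two_balls e he hdiam (by positivity : (0:ℝ) ≤ 1 / β)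
      (by positivity : (0:ℝ) ≤ 1 / β + s k) (hballb i) (hballw k)
    simp only [hndef] at h
    have h2 : (2:ℝ) / β = 1 / β + 1 / β := by ring
    linarith
  · -- condition 6
    intro k l
    have h := aux_two_balls e he hdiam (by positivity : (0:ℝ) ≤ 1 / β + s k)
      (by positivity : (0:ℝ) ≤ 1 / β + s l) (hballw k) (hballw l)
    have h2 : (2:ℝ) / β = 1 / β + 1 / β := by ring
    linarith
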